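/- Let X = [[1,1],[0,1]] and Y_\lambda = [[1,0],[\lambda,1]] in SL(2,C) with \lambda = -u^2, u nonzero. For any integer sequence n = (n_1, ..., n_{2m}), the word W(n) = X^{n_1} Y_\lambda^{n_2} X^{n_3} ... X^{n_{2m-1}} Y_\lambda^{n_{2m}} equals (-1)^{m-1} times the matrix [[-s^n_{2m+1}(u), (1/u) s^n_{2m}(u)], [-u s^{\sigma(n)}_{2m}(u), s^{\sigma(n)}_{2m-1}(u)]]. -/

import Mathlib

/-- n-Chebyshev polynomials: s 0 = 0, s 1 = 1, s_{k+2}(t) = n_{k+1} t s_{k+1}(t) - s_k(t)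
(0-indexed sequence: the 1-indexed entry n_i is `n (i-1)`). -/
def sChe (n : ℕ → ℤ) : ℕ → ℂ → ℂ
  | 0, _ => 0
  | 1, _ => 1
  | k + 2, t => (n k : ℂ) * t * sChe n (k + 1) t - sChe n k t

lemma sChe_unfold (n : ℕ → ℤ) (t : ℂ) {a b : ℕ} (h : a = b + 2) :
    sChe n a t = (n b : ℂ) * t * sChe n (b + 1) t - sChe n b t := by subst h; rfl

lemma upow (c : ℂ) (k : ℕ) :
    (!![1, c; 0, 1] : Matrix (Fin 2) (Fin 2) ℂ) ^ k = !![1, (k : ℂ) * c; 0, 1] := by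
  induction k with
  | zero => simp [Matrix.one_fin_two]
  | succ k ih =>
    rw [pow_succ, ih, Matrix.mul_fin_two]
    push_cast
    ring_nf

lemma uzpow (c : ℂ) (a : ℤ) :
    (!![1, c; 0, 1] : Matrix (Fin 2) (Fin 2) ℂ) ^ a = !![1, (a : ℂ) * c; 0, 1] := by
  cases a with
  | ofNat k => rw [Int.ofNat_eq_coe, zpow_natCast, upow]; norm_num
  | negSucc k =>
    rw [zpow_negSucc, upow]
    refine Matrix.inv_eq_right_inv ?_
    rw [Matrix.mul_fin_two, Matrix.one_fin_two]
    congr 1 <;> push_cast [Int.negSucc_eq] <;> ring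

lemma lpow (c : ℂ) (k : ℕ) :
    (!![1, 0; c, 1] : Matrix (Fin 2) (Fin 2) ℂ) ^ k = !![1, 0; (k : ℂ) * c, 1] := by
  induction k with
  | zero => simp [Matrix.one_fin_two]
  | succ k ih =>
    rw [pow_succ, ih, Matrix.mul_fin_two]
    push_cast
    ring_nf

lemma lzpow (c : ℂ) (a : ℤ) :
    (!![1, 0; c, 1] : Matrix (Fin 2) (Fin 2) ℂ) ^ a = !![1, 0; (a : ℂ) * c, 1] := by
  cases a with
  | ofNat k => rw [Int.ofNat_eq_coe, zpow_natCast, lpow]; norm_num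
  | negSucc k =>
    rw [zpow_negSucc, lpow]
    refine Matrix.inv_eq_right_inv ?_
    rw [Matrix.mul_fin_two, Matrix.one_fin_two]
    congr 1 <;> push_cast [Int.negSucc_eq] <;> ring

theorem word_matrix_formula (u : ℂ) (hu : u ≠ 0) (m : ℕ) (hm : 1 ≤ m)
    (n : ℕ → ℤ) :
    (List.ofFn fun i : Fin m =>
        (!![1, 1; 0, 1] : Matrix (Fin 2) (Fin 2) ℂ) ^ (n (2 * i.1)) *
          (!![1, 0; -u ^ 2, 1] : Matrix (Fin 2) (Fin 2) ℂ) ^ (n (2 * i.1 + 1))).prod =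
      ((-1 : ℂ) ^ (m - 1)) •
        !![-sChe n (2 * m + 1) u, (1 / u) * sChe n (2 * m) u;
           -u * sChe (fun j => n (j + 1)) (2 * m) u,
           sChe (fun j => n (j + 1)) (2 * m - 1) u] := by
  induction m, hm using Nat.le_induction with
  | base =>
    simp only [List.ofFn_succ, List.ofFn_zero, List.prod_cons, List.prod_nil, mul_one]
    rw [uzpow, lzpow, Matrix.mul_fin_two]
    norm_num
    rw [sChe_unfold n u (show 2*1+1 = 1+2 by ring),
      sChe_unfold n u (show 2*1 = 0+2 by ring),
      sChe_unfold (fun j => n (j+1)) u (show 2*1 = 0+2 by ring)]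
    refine ⟨⟨?_, ?_⟩, ?_, ?_⟩ <;> simp [sChe] <;> (try field_simp) <;> (try ring)
  | succ m hm ih =>
    obtain ⟨k, rfl⟩ : ∃ k, m = k + 1 := ⟨m - 1, (Nat.succ_pred_eq_of_pos hm).symm⟩
    rw [List.ofFn_succ', List.concat_eq_append, List.prod_append, List.prod_cons,
      List.prod_nil, mul_one]
    have ihs : (List.ofFn fun i : Fin (k+1) =>
        (!![1, 1; 0, 1] : Matrix (Fin 2) (Fin 2) ℂ) ^ (n (2 * (i.1 : ℕ))) *
          (!![1, 0; -u ^ 2, 1] : Matrix (Fin 2) (Fin 2) ℂ) ^ (n (2 * i.1 + 1))).prod = _ := ih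
    rw [show (List.ofFn fun i : Fin (k+1) =>
        (!![1, 1; 0, 1] : Matrix (Fin 2) (Fin 2) ℂ) ^ (n (2 * ((Fin.castSucc i).1 : ℕ))) *
          (!![1, 0; -u ^ 2, 1] : Matrix (Fin 2) (Fin 2) ℂ) ^ (n (2 * (Fin.castSucc i).1 + 1)))
        = (List.ofFn fun i : Fin (k+1) =>
        (!![1, 1; 0, 1] : Matrix (Fin 2) (Fin 2) ℂ) ^ (n (2 * (i.1 : ℕ))) *
          (!![1, 0; -u ^ 2, 1] : Matrix (Fin 2) (Fin 2) ℂ) ^ (n (2 * i.1 + 1))) from rfl,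
      ihs, uzpow, lzpow]
    simp only [Fin.val_last, Nat.add_sub_cancel]
    rw [Matrix.smul_mul, show ((-1:ℂ))^(k+1) = (-1)^k * (-1) from pow_succ _ _,
      mul_comm ((-1:ℂ)^k) (-1), mul_comm (-1:ℂ) ((-1:ℂ)^k), mul_smul]
    congr 1
    simp only [show 2*(k+1+1)+1 = 2*k+5 by omega, show 2*(k+1+1) = 2*k+4 by omega,
      show 2*(k+1)+1 = 2*k+3 by omega, show 2*(k+1) = 2*k+2 by omega,
      show 2*k+2-1 = 2*k+1 by omega, show 2*k+4-1 = 2*k+3 by omega]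
    rw [sChe_unfold n u (show 2*k+5 = 2*k+3+2 by omega)]
    simp only [show 2*k+3+1 = 2*k+4 by omega]
    rw [sChe_unfold n u (show 2*k+4 = 2*k+2+2 by omega),
      sChe_unfold (fun j => n (j+1)) u (show 2*k+4 = 2*k+2+2 by omega)]
    simp only [show 2*k+2+1 = 2*k+3 by omega]
    rw [sChe_unfold (fun j => n (j+1)) u (show 2*k+3 = 2*k+1+2 by omega)]
    simp only [show 2*k+1+1 = 2*k+2 by omega]
    rw [Matrix.mul_fin_two, Matrix.mul_fin_two]
    ext i j
    fin_cases i <;> fin_cases j <;> simp [Matrix.smul_apply] <;> (try field_simp) <;> (try ring)
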